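/- Let p ≥ 2, w(x), w(y) > 0 and u(x), u(y) be real numbers. Define Φ(x,y) = |u(x)-u(y)|^p - (|u(x)/w(x)|^p w(x) - |u(y)/w(y)|^p w(y)) |w(x)-w(y)|^{p-2}(w(x)-w(y)). Then Φ(x,y) ≥ 0. -/

import Mathlib

open Real

-- key lemma: for 0 < d < c, (|a|^p/c^(p-1) - |b|^p/d^(p-1)) * (c-d)^(p-1) ≤ |a-b|^p
lemma picone_key (p a b c d : ℝ) (hp : 2 ≤ p) (hd : 0 < d) (hdc : d < c) :
    (|a| ^ p / c ^ (p - 1) - |b| ^ p / d ^ (p - 1)) * (c - d) ^ (p - 1) ≤ |a - b| ^ p := by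
  have hc : 0 < c := hd.trans hdc
  have hcd : 0 < c - d := sub_pos.2 hdc
  set l : ℝ := (c - d) / c with hl
  set m : ℝ := d / c with hm
  have hl0 : 0 < l := div_pos hcd hc
  have hm0 : 0 < m := div_pos hd hc
  have hsum : l + m = 1 := by rw [hl, hm]; field_simp; ring
  set x : ℝ := |a - b| / l with hx
  set y : ℝ := |b| / m with hy
  have hx0 : 0 ≤ x := div_nonneg (abs_nonneg _) hl0.le
  have hy0 : 0 ≤ y := div_nonneg (abs_nonneg _) hm0.le
  have habs : |a| ≤ l * x + m * y := by
    have h1 : l * x = |a - b| := by rw [hx]; field_simp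
    have h2 : m * y = |b| := by rw [hy]; field_simp
    rw [h1, h2]
    calc |a| = |(a - b) + b| := by ring_nf
    _ ≤ |a - b| + |b| := abs_add_le _ _
  have hconv : (l * x + m * y) ^ p ≤ l * x ^ p + m * y ^ p :=
    (convexOn_rpow (by linarith)).2 hx0 hy0 hl0.le hm0.le hsum
  have h3 : |a| ^ p ≤ l * x ^ p + m * y ^ p :=
    le_trans (Real.rpow_le_rpow (abs_nonneg _) habs (by linarith)) hconv
  -- rewrite l * x^p and m * y^p
  have hlx : l * x ^ p = |a - b| ^ p * l ^ (1 - p) := by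
    rw [hx, Real.div_rpow (abs_nonneg _) hl0.le, Real.rpow_sub hl0, Real.rpow_one]
    field_simp
  have hmy : m * y ^ p = |b| ^ p * m ^ (1 - p) := by
    rw [hy, Real.div_rpow (abs_nonneg _) hm0.le, Real.rpow_sub hm0, Real.rpow_one]
    field_simp
  rw [hlx, hmy] at h3
  -- multiply by l ^ (p-1)
  have hE : (0:ℝ) < l ^ (p - 1) := Real.rpow_pos_of_pos hl0 _
  have h4 := mul_le_mul_of_nonneg_right h3 hE.le
  have hll : l ^ (1 - p) * l ^ (p - 1) = 1 := by
    rw [← Real.rpow_add hl0]; norm_num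
  have h5 : |a| ^ p * l ^ (p - 1) ≤ |a - b| ^ p + |b| ^ p * (m ^ (1 - p) * l ^ (p - 1)) := by
    calc |a| ^ p * l ^ (p - 1) ≤ (|a - b| ^ p * l ^ (1 - p) + |b| ^ p * m ^ (1 - p)) * l ^ (p - 1) := h4
    _ = |a - b| ^ p * (l ^ (1 - p) * l ^ (p - 1)) + |b| ^ p * (m ^ (1 - p) * l ^ (p - 1)) := by ring
    _ = |a - b| ^ p + |b| ^ p * (m ^ (1 - p) * l ^ (p - 1)) := by rw [hll, mul_one]
  -- identities in terms of c, d
  have hlp : l ^ (p - 1) = (c - d) ^ (p - 1) / c ^ (p - 1) := by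
    rw [hl]; exact Real.div_rpow hcd.le hc.le _
  have hmp : m ^ (1 - p) = c ^ (p - 1) / d ^ (p - 1) := by
    rw [hm, show (1:ℝ) - p = -(p-1) by ring, Real.rpow_neg (div_nonneg hd.le hc.le),
      Real.div_rpow hd.le hc.le, inv_div]
  have hC : (0:ℝ) < c ^ (p - 1) := Real.rpow_pos_of_pos hc _
  have hD : (0:ℝ) < d ^ (p - 1) := Real.rpow_pos_of_pos hd _
  have hml : m ^ (1 - p) * l ^ (p - 1) = (c - d) ^ (p - 1) / d ^ (p - 1) := by
    rw [hmp, hlp]; field_simp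
  rw [hml, hlp] at h5
  have expand : (|a| ^ p / c ^ (p - 1) - |b| ^ p / d ^ (p - 1)) * (c - d) ^ (p - 1)
      = |a| ^ p * ((c - d) ^ (p - 1) / c ^ (p - 1)) - |b| ^ p * ((c - d) ^ (p - 1) / d ^ (p - 1)) := by
    field_simp
  linarith [expand.le, expand.ge, h5]

theorem stmt_10 (p : ℝ) (hp : 2 ≤ p) (ux uy wx wy : ℝ) (hwx : 0 < wx) (hwy : 0 < wy) :
    0 ≤ |ux - uy| ^ p -
      (|ux / wx| ^ p * wx - |uy / wy| ^ p * wy) * |wx - wy| ^ (p - 2) * (wx - wy) := by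
  have hux : |ux / wx| ^ p * wx = |ux| ^ p / wx ^ (p - 1) := by
    rw [abs_div, abs_of_pos hwx, Real.div_rpow (abs_nonneg _) hwx.le,
      Real.rpow_sub_one hwx.ne']
    field_simp
  have huy : |uy / wy| ^ p * wy = |uy| ^ p / wy ^ (p - 1) := by
    rw [abs_div, abs_of_pos hwy, Real.div_rpow (abs_nonneg _) hwy.le,
      Real.rpow_sub_one hwy.ne']
    field_simp
  rw [hux, huy]
  rcases lt_trichotomy wx wy with h | h | h
  · -- wx < wy : |wx - wy| = wy - wx, (wx - wy) negative
    have h1 : |wx - wy| = wy - wx := by rw [abs_of_neg (by linarith)]; ring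
    have key := picone_key p uy ux wy wx hp hwx h
    have h2 : (wy - wx) ^ (p - 2) * (wx - wy) = -((wy - wx) ^ (p - 1)) := by
      rw [show p - 1 = (p - 2) + 1 by ring, Real.rpow_add_one (sub_ne_zero.2 h.ne')]
      ring
    rw [h1, mul_assoc, h2]
    have h3 : |uy - ux| = |ux - uy| := abs_sub_comm _ _
    rw [h3] at key
    nlinarith [key]
  · rw [h, sub_self, mul_zero, sub_zero]
    positivity
  · have h1 : |wx - wy| = wx - wy := abs_of_pos (by linarith)
    have key := picone_key p ux uy wx wy hp hwy h
    have h2 : (wx - wy) ^ (p - 2) * (wx - wy) = (wx - wy) ^ (p - 1) := by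
      rw [show p - 1 = (p - 2) + 1 by ring, Real.rpow_add_one (sub_ne_zero.2 h.ne')]
    rw [h1, mul_assoc, h2]
    linarith [key]
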